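/- Let Γ, h : (0,∞) → ℝ be differentiable with Γ(ρ) > 0 and h'(ρ) ≥ 0 for all ρ > 0. Fix ρ > 0 and p ∈ ℝ with p > h(ρ) and (ρΓ(ρ))'(ρ) > 0. Then the derivative of the specific internal energy function ρ ↦ e(p,ρ) = (p − h(ρ))/(Γ(ρ)·ρ) at ρ is strictly negative. -/

import Mathlib

open Set Filter

/-- Smith's "strong" condition for the Mie-Grüneisen EOS: at fixed pressure
`p > h(ρ)`, the specific internal energy `e(p,ρ) = (p - h(ρ))/(Γ(ρ)ρ)`
is strictly decreasing in the density, i.e. its derivative is strictly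
negative, provided `Γ > 0`, `h' ≥ 0` and `(ρΓ(ρ))'(ρ) > 0`. -/
theorem internal_energy_deriv_neg
    (Γ h : ℝ → ℝ)
    (hΓd : ∀ x > (0 : ℝ), DifferentiableAt ℝ Γ x)
    (hhd : ∀ x > (0 : ℝ), DifferentiableAt ℝ h x)
    (hΓpos : ∀ x > (0 : ℝ), 0 < Γ x)
    (hh' : ∀ x > (0 : ℝ), 0 ≤ deriv h x)
    (ρ p : ℝ) (hρ : 0 < ρ) (hp : h ρ < p)
    (hρΓ' : 0 < deriv (fun x => x * Γ x) ρ) :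
    deriv (fun x => (p - h x) / (Γ x * x)) ρ < 0 := by
  have hΓρ := hΓpos ρ hρ
  have hden : Γ ρ * ρ ≠ 0 := by positivity
  have hg : HasDerivAt (fun x => Γ x * x) (deriv Γ ρ * ρ + Γ ρ * 1) ρ :=
    (hΓd ρ hρ).hasDerivAt.mul (hasDerivAt_id ρ)
  have hg' : HasDerivAt (fun x => x * Γ x) (1 * Γ ρ + ρ * deriv Γ ρ) ρ :=
    (hasDerivAt_id ρ).mul (hΓd ρ hρ).hasDerivAt
  have hval : 0 < deriv Γ ρ * ρ + Γ ρ * 1 := by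
    have := hg'.deriv ▸ hρΓ'
    linarith [this]
  have hnum : HasDerivAt (fun x => p - h x) (0 - deriv h ρ) ρ :=
    (hasDerivAt_const ρ p).sub (hhd ρ hρ).hasDerivAt
  have hdiv : HasDerivAt (fun x => (p - h x) / (Γ x * x)) _ ρ := hnum.div hg hden
  rw [hdiv.deriv]
  apply div_neg_of_neg_of_pos
  · have h1 : (0 - deriv h ρ) * (Γ ρ * ρ) ≤ 0 :=
      mul_nonpos_of_nonpos_of_nonneg (by linarith [hh' ρ hρ]) (by positivity)
    have h2 : 0 < (p - h ρ) * (deriv Γ ρ * ρ + Γ ρ * 1) := by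
      nlinarith
    linarith
  · positivity
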